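/- Let G be a finite nonempty simple graph that is 2-colorable and has no isolated vertices, regarded as a structure for the language with one binary relation symbol E interpreted as the (symmetric, irreflexive) adjacency relation, and let K₂ be the graph with two vertices joined by an edge, similarly regarded. Then G and K₂ satisfy exactly the same positive Horn sentences. -/

import Mathlib

open FirstOrder Language

/-- Positive Horn bounded formulas over a relational language: built from atomic
formulas `R(v₁,…,vₙ)` (relation symbols applied to variables, no equality) using
only conjunction, existential quantification, and universal quantification. -/
inductive IsPH (L : FirstOrder.Language) : ∀ {n : ℕ}, L.BoundedFormula Empty n → Prop
  | rel {n l : ℕ} (R : L.Relations l) (v : Fin l → Fin n) :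
      IsPH L (BoundedFormula.rel R fun i => Term.var (Sum.inr (v i)))
  | inf {n : ℕ} {φ ψ : L.BoundedFormula Empty n} :
      IsPH L φ → IsPH L ψ → IsPH L (φ ⊓ ψ)
  | ex {n : ℕ} {φ : L.BoundedFormula Empty (n + 1)} : IsPH L φ → IsPH L φ.ex
  | all {n : ℕ} {φ : L.BoundedFormula Empty (n + 1)} : IsPH L φ → IsPH L φ.all

/-- `φ` is true in the `L`-structure on `M` given by `S`. -/
def RealizeIn (L : FirstOrder.Language) (M : Type*) (S : L.Structure M)
    (φ : L.Sentence) : Prop :=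
  @FirstOrder.Language.Sentence.Realize L M S φ

/-- The relation symbols of the language with a single binary relation symbol `E`. -/
inductive EdgeSym : ℕ → Type
  | edge : EdgeSym 2

/-- The relational language with one binary relation symbol `E`. -/
def Lgr : FirstOrder.Language := ⟨fun _ => Empty, EdgeSym⟩

/-- The `Lgr`-structure on `M` in which `E` is interpreted as the relation `r`. -/
def relStruct {M : Type*} (r : M → M → Prop) : Lgr.Structure M where
  funMap := fun f _ => Empty.elim f
  RelMap := fun R x =>
    match R, x with
    | EdgeSym.edge, x => r (x 0) (x 1)

/-- Positive (Horn) formulas transfer along surjective homomorphisms. -/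
lemma hom_pres {M N : Type*} (rM : M → M → Prop) (rN : N → N → Prop)
    (h : M → N) (hsurj : Function.Surjective h)
    (hhom : ∀ a b, rM a b → rN (h a) (h b)) :
    ∀ {n : ℕ} {φ : Lgr.BoundedFormula Empty n}, IsPH Lgr φ →
      ∀ (e : Empty → M) (xs : Fin n → M),
      @BoundedFormula.Realize Lgr M (relStruct rM) Empty n φ e xs →
      @BoundedFormula.Realize Lgr N (relStruct rN) Empty n φ (h ∘ e) (h ∘ xs) := by
  letI : Lgr.Structure M := relStruct rM
  letI : Lgr.Structure N := relStruct rN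
  intro n φ hφ
  induction hφ with
  | rel R v =>
    intro e xs hr
    cases R
    exact hhom (xs (v 0)) (xs (v 1)) hr
  | inf h1 h2 ih1 ih2 =>
    intro e xs hr
    rw [BoundedFormula.realize_inf] at hr ⊢
    exact ⟨ih1 e xs hr.1, ih2 e xs hr.2⟩
  | ex hp ih =>
    intro e xs hr
    rw [BoundedFormula.realize_ex] at hr ⊢
    obtain ⟨a, ha⟩ := hr
    refine ⟨h a, ?_⟩
    have := ih e (Fin.snoc xs a) ha
    rwa [Fin.comp_snoc] at this
  | all hp ih =>
    intro e xs hr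
    rw [BoundedFormula.realize_all] at hr ⊢
    intro b
    obtain ⟨a, rfl⟩ := hsurj b
    have := ih e (Fin.snoc xs a) (hr a)
    rwa [Fin.comp_snoc] at this

lemma snoc_comp {α : Type*} {n : ℕ} (xs : Fin n → (α → Fin 2)) (f : α → Fin 2) (u : α) :
    (fun i => (Fin.snoc xs f : Fin (n + 1) → α → Fin 2) i u)
      = Fin.snoc (fun i => xs i u) (f u) := by
  funext i
  refine Fin.lastCases ?_ ?_ i <;> simp

/-- Positive Horn formulas hold in a power of `K₂` iff they hold coordinatewise. -/
lemma prod_realize {V : Type*} :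
    ∀ {n : ℕ} {φ : Lgr.BoundedFormula Empty n}, IsPH Lgr φ →
      ∀ (e : Empty → (V → Fin 2)) (xs : Fin n → (V → Fin 2)),
      (@BoundedFormula.Realize Lgr (V → Fin 2)
          (relStruct fun f g : V → Fin 2 => ∀ u, f u ≠ g u) Empty n φ e xs ↔
        ∀ u : V, @BoundedFormula.Realize Lgr (Fin 2)
          (relStruct fun a b : Fin 2 => a ≠ b) Empty n φ (fun x => e x u)
          (fun i => xs i u)) := by
  letI : Lgr.Structure (V → Fin 2) := relStruct fun f g : V → Fin 2 => ∀ u, f u ≠ g u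
  letI : Lgr.Structure (Fin 2) := relStruct fun a b : Fin 2 => a ≠ b
  intro n φ hφ
  induction hφ with
  | rel R v =>
    intro e xs
    cases R
    exact Iff.rfl
  | inf h1 h2 ih1 ih2 =>
    intro e xs
    simp only [BoundedFormula.realize_inf, ih1 e xs, ih2 e xs, forall_and]
  | ex hp ih =>
    intro e xs
    simp only [BoundedFormula.realize_ex]
    constructor
    · rintro ⟨f, hf⟩ u
      refine ⟨f u, ?_⟩
      have := (ih e (Fin.snoc xs f)).1 hf u
      rwa [snoc_comp] at this
    · intro hu
      choose f hf using hu
      refine ⟨f, (ih e (Fin.snoc xs f)).2 fun u => ?_⟩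
      rw [snoc_comp]
      exact hf u
  | all hp ih =>
    intro e xs
    simp only [BoundedFormula.realize_all]
    constructor
    · intro hf u a
      have := (ih e (Fin.snoc xs (fun _ => a))).1 (hf _) u
      rwa [snoc_comp] at this
    · intro hu f
      refine (ih e (Fin.snoc xs f)).2 fun u => ?_
      rw [snoc_comp]
      exact hu u (f u)

/-- A finite nonempty 2-colorable simple graph with no isolated vertices satisfies
exactly the same positive Horn sentences as `K₂` (two vertices joined by an edge). -/
theorem stmt15 {V : Type} [Fintype V] [Nonempty V] (G : SimpleGraph V)
    (hcol : G.Colorable 2) (hiso : ∀ v : V, ∃ w : V, G.Adj v w)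
    (φ : Lgr.Sentence) (hφ : IsPH Lgr φ) :
    RealizeIn Lgr V (relStruct fun a b : V => G.Adj a b) φ ↔
      RealizeIn Lgr (Fin 2) (relStruct fun a b : Fin 2 => a ≠ b) φ := by
  classical
  obtain ⟨v₀, w₀, hvw⟩ : ∃ v w : V, G.Adj v w := by
    obtain ⟨w, hw⟩ := hiso (Classical.arbitrary V)
    exact ⟨_, _, hw⟩
  choose nb hnb using hiso
  have fin2 : ∀ a b c : Fin 2, a ≠ b → a ≠ c → b = c := by decide
  have fin2' : ∀ a b t : Fin 2, a ≠ b → t = a ∨ t = b := by decide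
  -- the coloring, a surjective homomorphism G → K₂
  let C := hcol.some
  have Csurj : Function.Surjective (C : V → Fin 2) := by
    intro t
    rcases fin2' (C v₀) (C w₀) t (C.valid hvw) with h | h
    · exact ⟨v₀, h.symm⟩
    · exact ⟨w₀, h.symm⟩
  -- the indicator functions
  let δ : V → (V → Fin 2) := fun v w => if w = v then 1 else 0
  have δinj : ∀ v w : V, δ v = δ w → v = w := by
    intro v w hvw'
    have := congrFun hvw' v
    simp only [δ, if_pos rfl] at this
    by_contra hne
    rw [if_neg hne] at this
    exact absurd this (by decide)
  -- a surjective homomorphism K₂^V → G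
  let h : (V → Fin 2) → V := fun f =>
    if hf : ∃ v, f = δ v then hf.choose
    else if hg : ∃ v, ∀ w, f w ≠ δ v w then nb hg.choose
    else if f v₀ = 1 then v₀ else nb v₀
  have hδ : ∀ v : V, h (δ v) = v := by
    intro v
    have hf : ∃ v', δ v = δ v' := ⟨v, rfl⟩
    have : h (δ v) = hf.choose := dif_pos hf
    rw [this]
    exact (δinj _ _ hf.choose_spec).symm
  have hsurj : Function.Surjective h := fun v => ⟨δ v, hδ v⟩
  have hhom : ∀ f g : V → Fin 2, (∀ u, f u ≠ g u) → G.Adj (h f) (h g) := by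
    intro f g H
    by_cases hAf : ∃ v, f = δ v
    · obtain ⟨v, rfl⟩ := hAf
      rw [hδ]
      by_cases hAg : ∃ w, g = δ w
      · obtain ⟨w, rfl⟩ := hAg
        rw [hδ]
        -- |V| = 2 case: every vertex is v or w
        have hvne : v ≠ w := by
          intro hvw'
          exact H v (by rw [hvw'])
        have hall : ∀ u : V, u = v ∨ u = w := by
          intro u
          by_contra hc
          push_neg at hc
          apply H u
          show δ v u = δ w u
          simp only [δ]
          rw [if_neg hc.1, if_neg hc.2]
        have h1 : G.Adj v (nb v) := hnb v
        rcases hall (nb v) with h2 | h2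
        · exact absurd h2 h1.ne'
        · rwa [h2] at h1
      · have hBg : ∃ w, ∀ u, g u ≠ δ w u := ⟨v, fun u => (H u).symm⟩
        have hh : h g = nb hBg.choose := by
          simp only [h]
          rw [dif_neg hAg, dif_pos hBg]
        have : δ v = δ hBg.choose := by
          funext u
          exact fin2 (g u) (δ v u) (δ hBg.choose u) (fun e => H u e.symm) (hBg.choose_spec u)
        rw [hh, ← δinj _ _ this]
        exact hnb v
    · by_cases hAg : ∃ w, g = δ w
      · obtain ⟨w, rfl⟩ := hAg
        rw [hδ]
        have hBf : ∃ v, ∀ u, f u ≠ δ v u := ⟨w, H⟩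
        have hh : h f = nb hBf.choose := by
          simp only [h]
          rw [dif_neg hAf, dif_pos hBf]
        have : δ w = δ hBf.choose := by
          funext u
          exact fin2 (f u) (δ w u) (δ hBf.choose u) (H u) (hBf.choose_spec u)
        rw [hh, ← δinj _ _ this]
        exact (hnb w).symm
      · have hBf : ¬ ∃ v, ∀ u, f u ≠ δ v u := by
          rintro ⟨v, hv⟩
          exact hAg ⟨v, funext fun u => fin2 (f u) (g u) (δ v u) (H u) (hv u)⟩
        have hBg : ¬ ∃ v, ∀ u, g u ≠ δ v u := by
          rintro ⟨v, hv⟩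
          exact hAf ⟨v, funext fun u => fin2 (g u) (f u) (δ v u) (fun e => H u e.symm) (hv u)⟩
        have hf : h f = if f v₀ = 1 then v₀ else nb v₀ := by
          simp only [h]; rw [dif_neg hAf, dif_neg hBf]
        have hg : h g = if g v₀ = 1 then v₀ else nb v₀ := by
          simp only [h]; rw [dif_neg hAg, dif_neg hBg]
        by_cases h1 : f v₀ = 1
        · have h2 : ¬ g v₀ = 1 := fun e => H v₀ (by rw [h1, e])
          rw [hf, hg, if_pos h1, if_neg h2]
          exact hnb v₀
        · have h2 : g v₀ = 1 := fin2 (f v₀) (g v₀) 1 (H v₀) h1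
          rw [hf, hg, if_neg h1, if_pos h2]
          exact (hnb v₀).symm
  have key : ∀ (M : Type) (S : Lgr.Structure M) (a : Empty → M) (b : Fin 0 → M),
      @BoundedFormula.Realize Lgr M S Empty 0 φ a b ↔ RealizeIn Lgr M S φ := by
    intro M S a b
    rw [Subsingleton.elim a default, Subsingleton.elim b default]
    exact Iff.rfl
  constructor
  · intro hG
    have := hom_pres (fun a b : V => G.Adj a b) (fun a b : Fin 2 => a ≠ b)
      (C : V → Fin 2) Csurj (fun a b hab => C.valid hab) hφ default default hG
    exact (key _ _ _ _).1 this
  · intro hK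
    -- first lift to the power K₂^V
    have hP : @BoundedFormula.Realize Lgr (V → Fin 2)
        (relStruct fun f g : V → Fin 2 => ∀ u, f u ≠ g u) Empty 0 φ default default := by
      refine (prod_realize hφ default default).2 fun u => ?_
      exact (key _ _ _ _).2 hK
    have := hom_pres (fun f g : V → Fin 2 => ∀ u, f u ≠ g u)
      (fun a b : V => G.Adj a b) h hsurj hhom hφ default default hP
    exact (key _ _ _ _).1 this
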